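/- arXiv:1807.06720 — 2 statements merged into one kernel-verified Lean document; each statement's English description precedes it below -/
import Mathlib

section
/- Let V be a normal supervisor on the plant G and let the attack constraint be normal (Σ_{c,A} ⊆ Σ_{o,A}). Then the following three statements are equivalent: (1) there exists a successful attacker; (2) there exists a successful enabling attacker; (3) there exists an attack pair, i.e., there exist s ∈ L(V/G) and σ ∈ Σ_{c,A} such that sσ ∈ L_dmg and, for every s' ∈ L(V/G) with P̂(P_o(s)) = P̂(P_o(s')) and s'σ ∈ L(G), one has s'σ ∈ L_dmg. -/
open scoped Classical

namespace ActuatorAttack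

variable {A : Type*}

/-- Natural projection onto a sub-alphabet `S`: erase the letters not in `S`. -/
noncomputable def proj (S : Set A) (l : List A) : List A :=
  l.filter (fun a => decide (a ∈ S))

/-- The least language containing `ε` and closed under appending an event `σ`
allowed by `allow` at `s`, provided the result lies in the plant language `LG`. -/
inductive Lang (LG : Set (List A)) (allow : List A → Set A) : List A → Prop
  | nil : Lang LG allow []
  | snoc {s : List A} {σ : A} : Lang LG allow s → σ ∈ allow s →
      (s ++ [σ]) ∈ LG → Lang LG allow (s ++ [σ])

/-- The closed-loop language `L(V/G)`. -/
def LVG (LG : Set (List A)) (So : Set A) (V : List A → Set A) :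
    Set (List A) :=
  {s | Lang LG (fun t => V (proj So t)) s}

/-- Auxiliary function for the attacker-observation map: `pre` is the prefix
of the supervisor observation sequence already processed. -/
noncomputable def phatAux (V : List A → Set A) (SoA : Set A) :
    List A → List A → List (List A × Set A)
  | _, [] => []
  | pre, σ :: rest =>
      (proj SoA [σ], V (pre ++ [σ])) :: phatAux V SoA (pre ++ [σ]) rest

/-- The attacker-observation map `P̂`: the i-th letter of `P̂(σ₁⋯σₙ)` is
`(P_{o,A}(σᵢ), V(σ₁⋯σᵢ))`. -/
noncomputable def phat (V : List A → Set A) (SoA : Set A) (w : List A) :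
    List (List A × Set A) :=
  phatAux V SoA [] w

/-- The attacked supervisor `V_A`. -/
noncomputable def VA (V : List A → Set A) (ScA SoA : Set A)
    (Att : List (List A × Set A) → Set A) (w : List A) : Set A :=
  (V w \ ScA) ∪ Att (phat V SoA w)

/-- The attacked closed-loop language `L(V_A/G)`. -/
def LVAG (LG : Set (List A)) (So : Set A) (V : List A → Set A)
    (ScA SoA : Set A) (Att : List (List A × Set A) → Set A) : Set (List A) :=
  {s | Lang LG (fun t =>
      {σ | proj So t ∈ proj So '' LVG LG So V ∧
           σ ∈ VA V ScA SoA Att (proj So t)}) s}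

/-- An attacker is enabling if it enables every attackable event enabled by
the supervisor. -/
def Enabling (LG : Set (List A)) (So : Set A) (V : List A → Set A)
    (ScA SoA : Set A) (Att : List (List A × Set A) → Set A) : Prop :=
  ∀ w ∈ proj So '' LVG LG So V, V w ∩ ScA ⊆ Att (phat V SoA w)

/-- An attacker is successful if the attacked closed-loop language meets the
damage set, and everything outside `P_o⁻¹(P_o(L(V/G)))` lies in `L_dmg·Σ*`. -/
def Successful (LG : Set (List A)) (So : Set A) (V : List A → Set A)
    (ScA SoA : Set A) (Att : List (List A × Set A) → Set A)
    (Ldmg : Set (List A)) : Prop :=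
  (LVAG LG So V ScA SoA Att ∩ Ldmg).Nonempty ∧
  LVAG LG So V ScA SoA Att \ (proj So ⁻¹' (proj So '' LVG LG So V)) ⊆
    {t | ∃ d ∈ Ldmg, d <+: t}

/-- `(s, σ)` is an attack pair. -/
def AttackPair (LG : Set (List A)) (So : Set A) (V : List A → Set A)
    (ScA SoA : Set A) (Ldmg : Set (List A)) (s : List A) (σ : A) : Prop :=
  s ∈ LVG LG So V ∧ σ ∈ ScA ∧ s ++ [σ] ∈ Ldmg ∧
  ∀ s' ∈ LVG LG So V,
    phat V SoA (proj So s) = phat V SoA (proj So s') →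
    s' ++ [σ] ∈ LG → s' ++ [σ] ∈ Ldmg

/-- `En(s, σ)`: one-step `σ`-extensions in `L(G)` of strings of `L(V/G)` that
are attacker-observation equivalent to `s`. -/
def En (LG : Set (List A)) (So : Set A) (V : List A → Set A)
    (SoA : Set A) (s : List A) (σ : A) : Set (List A) :=
  {t | ∃ s' ∈ LVG LG So V, t = s' ++ [σ] ∧ t ∈ LG ∧
       phat V SoA (proj So s) = phat V SoA (proj So s')}

/-- `I(w)`: attackable events `σ` such that some string `s'` of `L(V/G)` with
attacker observation `w` forms an attack pair `(s', σ)`. -/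
def ISet (LG : Set (List A)) (So : Set A) (V : List A → Set A)
    (ScA SoA : Set A) (Ldmg : Set (List A))
    (w : List (List A × Set A)) : Set A :=
  {σ | σ ∈ ScA ∧ ∃ s' ∈ LVG LG So V,
        phat V SoA (proj So s') = w ∧ AttackPair LG So V ScA SoA Ldmg s' σ}

/-- The supremal attacker `A^sup`. -/
def Asup (LG : Set (List A)) (So : Set A) (V : List A → Set A)
    (ScA SoA : Set A) (Ldmg : Set (List A))
    (w : List (List A × Set A)) : Set A :=
  {σ | ∃ s ∈ LVG LG So V, phat V SoA (proj So s) = w ∧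
        σ ∈ V (proj So s) ∩ ScA} ∪
  ISet LG So V ScA SoA Ldmg w

/-! ### Auxiliary lemmas -/

section AuxLemmas

variable {A : Type*}

lemma proj_append (S : Set A) (a b : List A) :
    proj S (a ++ b) = proj S a ++ proj S b :=
  List.filter_append ..

lemma proj_single_mem {S : Set A} {σ : A} (h : σ ∈ S) : proj S [σ] = [σ] := by
  simp [proj, h]

lemma proj_single_not {S : Set A} {σ : A} (h : σ ∉ S) : proj S [σ] = [] := by
  simp [proj, h]

lemma proj_single_eq {S : Set A} {ρ τ : A} (h : proj S [ρ] = [τ]) : ρ = τ := by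
  by_cases hρ : ρ ∈ S
  · rw [proj_single_mem hρ] at h
    exact List.singleton_inj.mp h
  · rw [proj_single_not hρ] at h
    cases h

lemma phatAux_append (V : List A → Set A) (S : Set A) (pre a b : List A) :
    phatAux V S pre (a ++ b) = phatAux V S pre a ++ phatAux V S (pre ++ a) b := by
  induction a generalizing pre with
  | nil => simp [phatAux]
  | cons x xs ih =>
      simp only [List.cons_append, phatAux, List.append_eq, ih, List.append_assoc,
        List.singleton_append, List.nil_append, List.cons.injEq, true_and]

lemma phatAux_length (V : List A → Set A) (S : Set A) (pre w : List A) :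
    (phatAux V S pre w).length = w.length := by
  induction w generalizing pre with
  | nil => rfl
  | cons x xs ih => simp [phatAux, ih]

lemma phat_append (V : List A → Set A) (S : Set A) (a b : List A) :
    phat V S (a ++ b) = phat V S a ++ phatAux V S a b := by
  unfold phat
  rw [phatAux_append]
  rfl

lemma phat_snoc (V : List A → Set A) (S : Set A) (w : List A) (σ : A) :
    phat V S (w ++ [σ]) = phat V S w ++ [(proj S [σ], V (w ++ [σ]))] := by
  rw [phat_append]
  rfl

lemma phat_length (V : List A → Set A) (S : Set A) (w : List A) :
    (phat V S w).length = w.length :=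
  phatAux_length V S [] w

lemma phat_prefix (V : List A → Set A) (S : Set A) {a b : List A} (h : a <+: b) :
    phat V S a <+: phat V S b := by
  obtain ⟨c, rfl⟩ := h
  exact ⟨_, (phat_append V S a c).symm⟩

lemma V_eq_of_phat_eq {V : List A → Set A} {S : Set A} {w w' : List A}
    (h : phat V S w = phat V S w') : V w = V w' := by
  have hlen : w.length = w'.length := by
    have := congrArg List.length h
    simpa [phat_length] using this
  rcases List.eq_nil_or_concat w with rfl | ⟨x, σ, rfl⟩
  · have : w' = [] := List.eq_nil_of_length_eq_zero hlen.symm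
    subst this; rfl
  · rcases List.eq_nil_or_concat w' with rfl | ⟨y, τ, rfl⟩
    · exfalso; simp [List.concat_eq_append] at hlen
    · simp only [List.concat_eq_append] at h ⊢
      rw [phat_snoc, phat_snoc] at h
      have h2 := (List.append_inj' h (by simp)).2
      simp only [List.cons.injEq, Prod.mk.injEq] at h2
      exact h2.1.2

lemma prefix_snoc_cases {l p : List A} {a : A} (h : p <+: l ++ [a]) :
    p = l ++ [a] ∨ p <+: l := by
  obtain ⟨c, hc⟩ := h
  rcases List.eq_nil_or_concat c with rfl | ⟨c', x, rfl⟩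
  · left; simpa using hc
  · right
    have hxx : (p ++ c') ++ [x] = l ++ [a] := by
      rw [← hc]; simp [List.concat_eq_append]
    obtain ⟨h1, _⟩ := List.append_inj' hxx (by simp)
    exact ⟨c', h1⟩

lemma Lang_prefix {LG : Set (List A)} {allow : List A → Set A} {u : List A}
    (h : Lang LG allow u) : ∀ p, p <+: u → Lang LG allow p := by
  induction h with
  | nil =>
      intro p hp
      rw [List.prefix_nil.mp hp]
      exact Lang.nil
  | @snoc s σ hs hσ hG ih =>
      intro p hp
      rcases prefix_snoc_cases hp with rfl | hp'
      · exact Lang.snoc hs hσ hG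
      · exact ih p hp'

/-- If `u` is in a closed-loop-style language whose enablement function factors
through `proj So`, then every observable event occurring in `proj So u` was
enabled at the corresponding observation prefix. -/
lemma step_of_mem {LG : Set (List A)} (So : Set A) (F : List A → Set A)
    {u : List A} (h : Lang LG (fun t => F (proj So t)) u) :
    ∀ w₁ w₂ σ, proj So u = w₁ ++ σ :: w₂ → σ ∈ F w₁ := by
  induction h with
  | nil =>
      intro w₁ w₂ σ hw
      exact absurd hw.symm (by simp [proj])
  | @snoc s τ hs hτ hG ih =>
      intro w₁ w₂ σ hw
      rw [proj_append] at hw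
      by_cases hτS : τ ∈ So
      · rw [proj_single_mem hτS] at hw
        rcases List.eq_nil_or_concat w₂ with rfl | ⟨w₂', x, rfl⟩
        · obtain ⟨h1, h2⟩ := List.append_inj' hw (by simp)
          obtain rfl : τ = σ := List.singleton_inj.mp h2
          rw [← h1]
          exact hτ
        · have hxx : proj So s ++ [τ] = (w₁ ++ σ :: w₂') ++ [x] := by
            rw [hw]; simp [List.concat_eq_append]
          obtain ⟨h1, _⟩ := List.append_inj' hxx (by simp)
          exact ih _ _ _ h1
      · rw [proj_single_not hτS, List.append_nil] at hw
        exact ih _ _ _ hw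

/-- Decoding the attacker observation: if `phat (x ++ [τ])` is a prefix of
`phat w` with `τ` attacker-observable, then `w` decomposes around an
occurrence of `τ` whose left part is `phat`-equivalent to `x`. -/
lemma phat_decode {V : List A → Set A} {SoA : Set A} {x w : List A} {τ : A}
    (hτ : τ ∈ SoA) (h : phat V SoA (x ++ [τ]) <+: phat V SoA w) :
    ∃ w₁ w₂, w = w₁ ++ τ :: w₂ ∧ phat V SoA w₁ = phat V SoA x := by
  set k := x.length with hk
  have hlen : k + 1 ≤ w.length := by
    have := h.length_le
    simpa [phat_length] using this
  have hpre : phat V SoA (w.take (k + 1)) <+: phat V SoA w :=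
    phat_prefix V SoA (List.take_prefix _ _)
  have hEq : phat V SoA (w.take (k + 1)) = phat V SoA (x ++ [τ]) := by
    have hl : (phat V SoA (w.take (k + 1))).length =
        (phat V SoA (x ++ [τ])).length := by
      simp [phat_length, List.length_take, Nat.min_eq_left hlen]
      exact hk
    rcases List.prefix_or_prefix_of_prefix hpre h with h' | h'
    · exact h'.eq_of_length hl
    · exact (h'.eq_of_length hl.symm).symm
  rcases List.eq_nil_or_concat (w.take (k + 1)) with hnil | ⟨y, ρ, hy⟩
  · exfalso
    have := congrArg List.length hnil
    simp [List.length_take, Nat.min_eq_left hlen] at this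
  · rw [List.concat_eq_append] at hy
    rw [hy, phat_snoc, phat_snoc] at hEq
    obtain ⟨h1, h2⟩ := List.append_inj' hEq (by simp)
    simp only [List.cons.injEq, Prod.mk.injEq] at h2
    have hρτ : ρ = τ := by
      apply proj_single_eq
      rw [h2.1.1, proj_single_mem hτ]
    refine ⟨y, w.drop (k + 1), ?_, h1⟩
    conv_lhs => rw [← List.take_append_drop (k + 1) w]
    rw [hy, hρτ]
    simp

/-- Key lemma using normality: any string of `L(V/G)` whose attacker
observation is a prefix of that of some string of `L(V_A/G)` is itself in
`L(V_A/G)`. -/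
lemma memLVAG_of_phat_prefix {So : Set A} {LG : Set (List A)}
    {V : List A → Set A} {ScA SoA : Set A}
    {Att : List (List A × Set A) → Set A}
    (hoA : SoA ⊆ So) (hnormA : ScA ⊆ SoA) :
    ∀ s', s' ∈ LVG LG So V →
      ∀ u, u ∈ LVAG LG So V ScA SoA Att →
        phat V SoA (proj So s') <+: phat V SoA (proj So u) →
        s' ∈ LVAG LG So V ScA SoA Att := by
  intro s' hs'
  induction hs' with
  | nil => intro u _ _; exact Lang.nil
  | @snoc p τ hp hτ hG ih =>
      intro u hu hpre
      have hppre : proj So p <+: proj So (p ++ [τ]) := by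
        rw [proj_append]; exact ⟨_, rfl⟩
      have hpA : p ∈ LVAG LG So V ScA SoA Att :=
        ih u hu ((phat_prefix V SoA hppre).trans hpre)
      refine Lang.snoc hpA ⟨⟨p, hp, rfl⟩, ?_⟩ hG
      by_cases hτc : τ ∈ ScA
      · have hτo : τ ∈ So := hoA (hnormA hτc)
        rw [proj_append, proj_single_mem hτo] at hpre
        obtain ⟨w₁, w₂, hw, hph⟩ := phat_decode (hnormA hτc) hpre
        have hstep := step_of_mem So
          (F := fun w => {σ | w ∈ proj So '' LVG LG So V ∧
            σ ∈ VA V ScA SoA Att w}) hu w₁ w₂ τ hw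
        rcases hstep.2 with hl | hr
        · exact absurd hτc hl.2
        · refine Or.inr ?_
          rw [← hph]
          exact hr
      · exact Or.inl ⟨hτ, hτc⟩

/-- From an attack pair one can build a successful enabling attacker. -/
lemma exists_enabling_of_attackPair {So : Set A} {LG : Set (List A)}
    {V : List A → Set A} {ScA SoA : Set A} {Ldmg : Set (List A)}
    (hLd : Ldmg ⊆ LG) {s : List A} {σ : A}
    (hAP : AttackPair LG So V ScA SoA Ldmg s σ) :
    ∃ Att : List (List A × Set A) → Set A, (∀ x, Att x ⊆ ScA) ∧
      Enabling LG So V ScA SoA Att ∧ Successful LG So V ScA SoA Att Ldmg := by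
  classical
  obtain ⟨hs, hσc, hdmg, huniv⟩ := hAP
  set Att : List (List A × Set A) → Set A := fun w =>
    {τ | τ ∈ ScA ∧ ∃ t ∈ LVG LG So V,
      phat V SoA (proj So t) = w ∧ τ ∈ V (proj So t)} ∪
    {τ | τ = σ ∧ w = phat V SoA (proj So s)} with hAttdef
  have hsub : ∀ x, Att x ⊆ ScA := by
    intro x τ hτ
    rcases hτ with h | h
    · exact h.1
    · rw [h.1]; exact hσc
  have hLVGsub : ∀ t, t ∈ LVG LG So V → t ∈ LVAG LG So V ScA SoA Att := by
    intro t ht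
    induction ht with
    | nil => exact Lang.nil
    | @snoc p τ hp hτ hG ih =>
        refine Lang.snoc ih ⟨⟨p, hp, rfl⟩, ?_⟩ hG
        by_cases hτc : τ ∈ ScA
        · exact Or.inr (Or.inl ⟨hτc, p, hp, rfl, hτ⟩)
        · exact Or.inl ⟨hτ, hτc⟩
  have hsd : s ++ [σ] ∈ LVAG LG So V ScA SoA Att :=
    Lang.snoc (hLVGsub s hs)
      ⟨⟨s, hs, rfl⟩, Or.inr (Or.inr ⟨rfl, rfl⟩)⟩ (hLd hdmg)
  have hcover : ∀ t, t ∈ LVAG LG So V ScA SoA Att →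
      t ∈ LVG LG So V ∨ ∃ d ∈ Ldmg, d <+: t := by
    intro t ht
    induction ht with
    | nil => exact Or.inl Lang.nil
    | @snoc u τ hu hall hG ih =>
        rcases ih with huL | ⟨d, hd, hdp⟩
        · rcases hall.2 with ⟨hτV, _⟩ | hA
          · exact Or.inl (Lang.snoc huL hτV hG)
          · rcases hA with ⟨_, t', ht', hph, hτV⟩ | ⟨hτσ, hph⟩
            · have hVeq : V (proj So t') = V (proj So u) := V_eq_of_phat_eq hph
              exact Or.inl (Lang.snoc huL (hVeq ▸ hτV) hG)
            · subst hτσ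
              have : u ++ [τ] ∈ Ldmg := huniv u huL hph.symm hG
              exact Or.inr ⟨u ++ [τ], this, List.prefix_refl _⟩
        · exact Or.inr ⟨d, hd, hdp.trans ⟨[τ], rfl⟩⟩
  refine ⟨Att, hsub, ?_, ⟨s ++ [σ], hsd, hdmg⟩, ?_⟩
  · rintro w ⟨t, ht, rfl⟩ τ ⟨hτV, hτc⟩
    exact Or.inl ⟨hτc, t, ht, rfl, hτV⟩
  · rintro t ⟨htA, htn⟩
    rcases hcover t htA with h | h
    · exact absurd ⟨t, h, rfl⟩ htn
    · exact h

/-- From any successful attacker one can extract an attack pair. -/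
lemma exists_attackPair_of_successful {So : Set A} {LG : Set (List A)}
    {V : List A → Set A} {ScA SoA : Set A} {Ldmg : Set (List A)}
    (hoA : SoA ⊆ So) (hnormA : ScA ⊆ SoA)
    (hLdV : Ldmg ∩ LVG LG So V = ∅)
    {Att : List (List A × Set A) → Set A} (hsub : ∀ x, Att x ⊆ ScA)
    (hS : Successful LG So V ScA SoA Att Ldmg) :
    ∃ s σ, AttackPair LG So V ScA SoA Ldmg s σ := by
  have hdisj : ∀ d, d ∈ Ldmg → d ∈ LVG LG So V → False := fun d h1 h2 =>
    Set.eq_empty_iff_forall_notMem.mp hLdV d ⟨h1, h2⟩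
  have claim : ∀ t, t ∈ LVAG LG So V ScA SoA Att →
      t ∈ LVG LG So V ∨ ∃ s σ', AttackPair LG So V ScA SoA Ldmg s σ' := by
    intro t ht
    induction ht with
    | nil => exact Or.inl Lang.nil
    | @snoc u τ hu hall hG ih =>
        rcases ih with huL | hap
        · by_cases hτV : τ ∈ V (proj So u)
          · exact Or.inl (Lang.snoc huL hτV hG)
          · right
            have hτA : τ ∈ Att (phat V SoA (proj So u)) := by
              rcases hall.2 with ⟨h, _⟩ | h
              · exact absurd h hτV
              · exact h
            have hτc : τ ∈ ScA := hsub _ hτA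
            have hτo : τ ∈ So := hoA (hnormA hτc)
            have key : ∀ s', s' ∈ LVG LG So V →
                phat V SoA (proj So u) = phat V SoA (proj So s') →
                s' ++ [τ] ∈ LG → s' ++ [τ] ∈ Ldmg := by
              intro s' hs' hph hG'
              have hs'A : s' ∈ LVAG LG So V ScA SoA Att :=
                memLVAG_of_phat_prefix hoA hnormA s' hs' u hu
                  (by rw [← hph])
              have htA : s' ++ [τ] ∈ LVAG LG So V ScA SoA Att :=
                Lang.snoc hs'A ⟨⟨s', hs', rfl⟩,
                  Or.inr (by rw [← hph]; exact hτA)⟩ hG'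
              have hnot : proj So (s' ++ [τ]) ∉ proj So '' LVG LG So V := by
                rintro ⟨v, hv, hpv⟩
                rw [proj_append, proj_single_mem hτo] at hpv
                have hin : τ ∈ V (proj So s') :=
                  step_of_mem So (F := V) hv (proj So s') [] τ
                    (by rw [hpv])
                have hVeq : V (proj So u) = V (proj So s') :=
                  V_eq_of_phat_eq hph
                rw [← hVeq] at hin
                exact hτV hin
              obtain ⟨d, hd, hdp⟩ := hS.2 ⟨htA, hnot⟩
              rcases prefix_snoc_cases hdp with rfl | hdp'
              · exact hd
              · exact absurd (Lang_prefix hs' d hdp') (hdisj d hd)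
            exact ⟨u, τ, huL, hτc, key u huL rfl hG, key⟩
        · exact Or.inr hap
  obtain ⟨t, htA, htd⟩ := hS.1
  rcases claim t htA with h | h
  · exact absurd h (fun h' => hdisj t htd h')
  · exact h

end AuxLemmas

/-- For a normal supervisor and a normal attack constraint,
the existence of a successful attacker, of a successful enabling attacker,
and of an attack pair are all equivalent. -/
theorem stmt_8 {A : Type*} [Fintype A] (So Sc : Set A) (LG : Set (List A))
    (hnil : [] ∈ LG) (hpref : ∀ s t : List A, s <+: t → t ∈ LG → s ∈ LG)
    (V : List A → Set A) (hV : ∀ w, Scᶜ ⊆ V w)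
    (hnormV : Sc ⊆ So)
    (ScA SoA : Set A) (hcA : ScA ⊆ Sc) (hoA : SoA ⊆ So)
    (hnormA : ScA ⊆ SoA)
    (Ldmg : Set (List A)) (hLd : Ldmg ⊆ LG)
    (hLdV : Ldmg ∩ LVG LG So V = ∅) :
    ((∃ Att : List (List A × Set A) → Set A, (∀ x, Att x ⊆ ScA) ∧
        Successful LG So V ScA SoA Att Ldmg) ↔
      (∃ Att : List (List A × Set A) → Set A, (∀ x, Att x ⊆ ScA) ∧
        Enabling LG So V ScA SoA Att ∧
        Successful LG So V ScA SoA Att Ldmg)) ∧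
    ((∃ Att : List (List A × Set A) → Set A, (∀ x, Att x ⊆ ScA) ∧
        Successful LG So V ScA SoA Att Ldmg) ↔
      (∃ s σ, AttackPair LG So V ScA SoA Ldmg s σ)) := by
  have h13 : (∃ Att : List (List A × Set A) → Set A, (∀ x, Att x ⊆ ScA) ∧
      Successful LG So V ScA SoA Att Ldmg) →
      ∃ s σ, AttackPair LG So V ScA SoA Ldmg s σ := by
    rintro ⟨Att, hsub, hS⟩
    exact exists_attackPair_of_successful hoA hnormA hLdV hsub hS
  have h31 : (∃ s σ, AttackPair LG So V ScA SoA Ldmg s σ) →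
      ∃ Att : List (List A × Set A) → Set A, (∀ x, Att x ⊆ ScA) ∧
        Enabling LG So V ScA SoA Att ∧
        Successful LG So V ScA SoA Att Ldmg := by
    rintro ⟨s, σ, hAP⟩
    exact exists_enabling_of_attackPair hLd hAP
  constructor
  · constructor
    · intro h
      exact h31 (h13 h)
    · rintro ⟨Att, h1, _, h3⟩
      exact ⟨Att, h1, h3⟩
  · constructor
    · exact h13
    · intro h
      obtain ⟨Att, h1, _, h3⟩ := h31 h
      exact ⟨Att, h1, h3⟩

end ActuatorAttack
end

section
/- Let V be a normal supervisor on the plant G, let the attack constraint be normal (Σ_{c,A} ⊆ Σ_{o,A}), and suppose AP_dmg ≠ ∅. Then L(V_{A^sup}/G) = L(V/G) ∪ ⋃_{(s,σ)∈AP_dmg} En(s, σ). -/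
open scoped Classical

namespace ActuatorAttack

variable {A : Type*}

lemma prefix_snoc {s u : List A} {σ : A} (h : s <+: u ++ [σ]) :
    s <+: u ∨ s = u ++ [σ] := by
  obtain ⟨r, hr⟩ := h
  rcases List.eq_nil_or_concat r with rfl | ⟨r₀, a, rfl⟩
  · right; simpa using hr
  · left
    rw [List.concat_eq_append, ← List.append_assoc] at hr
    obtain ⟨h1, -⟩ := List.append_inj' hr rfl
    exact ⟨r₀, h1⟩

lemma lang_prefix {LG : Set (List A)} {allow : List A → Set A} {t : List A}
    (h : Lang LG allow t) : ∀ {s : List A}, s <+: t → Lang LG allow s := by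
  induction h with
  | nil => intro s hs; rw [List.prefix_nil.mp hs]; exact Lang.nil
  | snoc hu hσ hLG ih =>
    intro s hs
    rcases prefix_snoc hs with h | rfl
    · exact ih h
    · exact Lang.snoc hu hσ hLG

lemma lang_in_LG {LG : Set (List A)} {allow : List A → Set A} {t : List A}
    (h : Lang LG allow t) (hnil : [] ∈ LG) : t ∈ LG := by
  cases h with
  | nil => exact hnil
  | snoc _ _ hLG => exact hLG

lemma proj_snoc_mem {S : Set A} {σ : A} (hσ : σ ∈ S) (l : List A) :
    proj S (l ++ [σ]) = proj S l ++ [σ] := by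
  simp [proj, List.filter_append, hσ]

lemma phatAux_eq (V : List A → Set A) (SoA : Set A) :
    ∀ (w1 : List A) (pre1 pre2 w2 : List A),
      phatAux V SoA pre1 w1 = phatAux V SoA pre2 w2 →
      (w1 = [] → w2 = []) ∧ (w1 ≠ [] → V (pre1 ++ w1) = V (pre2 ++ w2)) := by
  intro w1
  induction w1 with
  | nil =>
    intro pre1 pre2 w2 h
    cases w2 with
    | nil => exact ⟨fun _ => rfl, fun h' => absurd rfl h'⟩
    | cons a r => simp [phatAux] at h
  | cons σ r ih =>
    intro pre1 pre2 w2 h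
    cases w2 with
    | nil => simp [phatAux] at h
    | cons σ' r' =>
      simp only [phatAux, List.cons.injEq, Prod.mk.injEq] at h
      obtain ⟨⟨-, hV⟩, htail⟩ := h
      refine ⟨fun h' => by simp at h', fun _ => ?_⟩
      obtain ⟨h1, h2⟩ := ih (pre1 ++ [σ]) (pre2 ++ [σ']) r' htail
      rcases eq_or_ne r [] with rfl | hr
      · rw [h1 rfl]; simpa using hV
      · have := h2 hr
        rw [List.append_assoc, List.append_assoc] at this
        simpa using this

lemma phat_eq_V {V : List A → Set A} {SoA : Set A} {w1 w2 : List A}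
    (h : phat V SoA w1 = phat V SoA w2) : V w1 = V w2 := by
  obtain ⟨h1, h2⟩ := phatAux_eq V SoA w1 [] [] w2 h
  rcases eq_or_ne w1 [] with rfl | hw
  · rw [h1 rfl]
  · simpa using h2 hw

lemma proj_split {S : Set A} {σ : A} (hσ : σ ∈ S) :
    ∀ (u : List A) (x : List A), proj S u = x ++ [σ] →
      ∃ u₁, u₁ ++ [σ] <+: u ∧ proj S u₁ = x := by
  intro u
  induction u using List.reverseRecOn with
  | nil => intro x h; simp [proj] at h
  | append_singleton u₀ a ih =>
    intro x h
    by_cases ha : a ∈ S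
    · rw [proj_snoc_mem ha] at h
      obtain ⟨h1, h2⟩ := List.append_inj' h rfl
      simp only [List.cons.injEq] at h2
      refine ⟨u₀, ?_, h1⟩
      rw [h2.1]
    · have he : proj S (u₀ ++ [a]) = proj S u₀ := by
        simp [proj, List.filter_append, ha]
      rw [he] at h
      obtain ⟨u₁, hp, hpe⟩ := ih x h
      exact ⟨u₁, hp.trans ⟨[a], rfl⟩, hpe⟩

lemma LVG_subset_LVAG_Asup (So : Set A) (LG : Set (List A))
    (V : List A → Set A) (ScA SoA : Set A) (Ldmg : Set (List A)) :
    LVG LG So V ⊆ LVAG LG So V ScA SoA (Asup LG So V ScA SoA Ldmg) := by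
  intro t ht
  induction ht with
  | nil => exact Lang.nil
  | @snoc s σ hs hσ hLG ih =>
    refine Lang.snoc ih ⟨⟨s, hs, rfl⟩, ?_⟩ hLG
    by_cases hA : σ ∈ ScA
    · exact Or.inr (Or.inl ⟨s, hs, rfl, hσ, hA⟩)
    · exact Or.inl ⟨hσ, hA⟩

/-- If `AP_dmg ≠ ∅`, then
`L(V_{A^sup}/G) = L(V/G) ∪ ⋃_{(s,σ)∈AP_dmg} En(s,σ)`. -/
theorem stmt_14 {A : Type*} [Fintype A] (So Sc : Set A) (LG : Set (List A))
    (hnil : [] ∈ LG) (hpref : ∀ s t : List A, s <+: t → t ∈ LG → s ∈ LG)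
    (V : List A → Set A) (hV : ∀ w, Scᶜ ⊆ V w)
    (hnormV : Sc ⊆ So)
    (ScA SoA : Set A) (hcA : ScA ⊆ Sc) (hoA : SoA ⊆ So)
    (hnormA : ScA ⊆ SoA)
    (Ldmg : Set (List A)) (hLd : Ldmg ⊆ LG)
    (hLdV : Ldmg ∩ LVG LG So V = ∅)
    (hAP : ∃ s σ, AttackPair LG So V ScA SoA Ldmg s σ) :
    LVAG LG So V ScA SoA (Asup LG So V ScA SoA Ldmg) =
      LVG LG So V ∪
        ⋃ p ∈ {p : List A × A | AttackPair LG So V ScA SoA Ldmg p.1 p.2},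
          En LG So V SoA p.1 p.2 := by
  ext t
  simp only [Set.mem_union, Set.mem_iUnion, Set.mem_setOf_eq, exists_prop]
  constructor
  · intro ht
    induction ht with
    | nil => exact Or.inl Lang.nil
    | @snoc u σ hu hσ hLG ih =>
      obtain ⟨⟨v, hv, hvproj⟩, hVA⟩ := hσ
      rcases ih with huL | ⟨p, hp, hEn⟩
      · rcases hVA with ⟨hσV, hσnA⟩ | hAtt
        · exact Or.inl (Lang.snoc huL hσV hLG)
        · rcases hAtt with ⟨s₀, hs₀, hph, hσV0⟩ | ⟨hσA, s', hs', hph, hap⟩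
          · exact Or.inl (Lang.snoc huL ((phat_eq_V hph) ▸ hσV0.1) hLG)
          · exact Or.inr ⟨(s', σ), hap, u, huL, rfl, hLG, hph⟩
      · obtain ⟨s₁', hs₁', hueq, huLG, hph1⟩ := hEn
        obtain ⟨hp1, hp2, hp3, hp4⟩ := hp
        have hσ₁So : p.2 ∈ So := hnormV (hcA hp2)
        have hvp : proj So v = proj So s₁' ++ [p.2] := by
          rw [hvproj, hueq, proj_snoc_mem hσ₁So]
        obtain ⟨u₁, hpre, hproj⟩ := proj_split hσ₁So v _ hvp
        have hu₁σ : u₁ ++ [p.2] ∈ LVG LG So V := lang_prefix hv hpre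
        have hu₁ : u₁ ∈ LVG LG So V :=
          lang_prefix hv ((List.prefix_append u₁ [p.2]).trans hpre)
        have hphu₁ : phat V SoA (proj So p.1) = phat V SoA (proj So u₁) := by
          rw [hproj]; exact hph1
        have hdmg : u₁ ++ [p.2] ∈ Ldmg :=
          hp4 u₁ hu₁ hphu₁ (lang_in_LG hu₁σ hnil)
        have hmem : u₁ ++ [p.2] ∈ Ldmg ∩ LVG LG So V := ⟨hdmg, hu₁σ⟩
        rw [hLdV] at hmem
        exact hmem.elim
  · intro h
    rcases h with htL | ⟨p, hp, s'', hs'', rfl, hLGm, hph⟩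
    · exact LVG_subset_LVAG_Asup So LG V ScA SoA Ldmg htL
    · refine Lang.snoc (LVG_subset_LVAG_Asup So LG V ScA SoA Ldmg hs'')
        ⟨⟨s'', hs'', rfl⟩, Or.inr (Or.inr ⟨hp.2.1, p.1, hp.1, hph, hp⟩)⟩ hLGm


end ActuatorAttack
end
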